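/- arXiv:2410.02020 — 3 statements merged into one kernel-verified Lean document; each statement's English description precedes it below -/
import Mathlib

section
/- The potential energy V(Q) = (1/2)·∫_{-∞}^{∞} (Q'(x)² + k²·sin²(Q(x))) dx of the kink Q(x) = 2·arctan(e^{kx}) equals 2k. -/
open Real MeasureTheory Set Filter Topology

lemma integrableOn_exp_mul_Iic' {b : ℝ} (hb : 0 < b) :
    IntegrableOn (fun x : ℝ => Real.exp (b * x)) (Iic (0:ℝ)) := by
  refine integrableOn_Iic_of_intervalIntegral_norm_bounded (l := atBot) (a := fun y : ℝ => y)
    (1 / b) 0 (fun y => ?_) tendsto_id (Filter.Eventually.of_forall fun y => ?_)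
  · exact ((Real.continuous_exp.comp (continuous_const.mul continuous_id)).integrableOn_Icc
      (a := y) (b := 0)).mono_set Ioc_subset_Icc_self
  · have hle : ∀ x : ℝ, ‖Real.exp (b * x)‖ = Real.exp (b * x) := fun x =>
      Real.norm_of_nonneg (Real.exp_pos _).le
    simp only [hle]
    have : (∫ x in y..0, Real.exp (b * x)) = b⁻¹ * (Real.exp (b * 0) - Real.exp (b * y)) := by
      rw [intervalIntegral.integral_comp_mul_left (fun u => Real.exp u) hb.ne',
        integral_exp, smul_eq_mul]
    rw [this, mul_zero, Real.exp_zero, one_div]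
    have h1 : 0 < Real.exp (b * y) := Real.exp_pos _
    have hbinv : 0 ≤ b⁻¹ := (inv_pos.mpr hb).le
    nlinarith

/-- The potential energy of the kink `Q(x) = 2·arctan(e^{kx})` equals `2k`. -/
theorem kink_energy (k : ℝ) (hk : 0 < k) (Q : ℝ → ℝ)
    (hQ : ∀ x, Q x = 2 * Real.arctan (Real.exp (k * x))) :
    (1 / 2) * ∫ x : ℝ, ((deriv Q x) ^ 2 + k ^ 2 * (Real.sin (Q x)) ^ 2) = 2 * k := by
  have hQf : Q = fun x => 2 * Real.arctan (Real.exp (k * x)) := funext hQ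
  subst hQf
  set g : ℝ → ℝ := fun x => 8 * k ^ 2 * Real.exp (k * x) ^ 2 / (1 + Real.exp (k * x) ^ 2) ^ 2
    with hg
  -- positivity of denominator
  have hden : ∀ x : ℝ, (0:ℝ) < 1 + Real.exp (k * x) ^ 2 := fun x => by positivity
  -- derivative of Q
  have hQder : ∀ x : ℝ, HasDerivAt (fun x => 2 * Real.arctan (Real.exp (k * x)))
      (2 * (1 / (1 + Real.exp (k * x) ^ 2) * (Real.exp (k * x) * k))) x := by
    intro x
    have h1 : HasDerivAt (fun x : ℝ => Real.exp (k * x)) (Real.exp (k * x) * k) x := by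
      simpa [mul_comm] using ((hasDerivAt_id x).const_mul k).exp
    exact ((Real.hasDerivAt_arctan (Real.exp (k * x))).comp x h1).const_mul 2
  -- the integrand equals g
  have hInt : ∀ x : ℝ,
      (deriv (fun x => 2 * Real.arctan (Real.exp (k * x))) x) ^ 2
        + k ^ 2 * (Real.sin (2 * Real.arctan (Real.exp (k * x)))) ^ 2 = g x := by
    intro x
    set t := Real.exp (k * x) with ht
    have hd : deriv (fun x => 2 * Real.arctan (Real.exp (k * x))) x
        = 2 * (1 / (1 + t ^ 2) * (t * k)) := (hQder x).deriv
    have hsin : Real.sin (2 * Real.arctan t) = 2 * t / (1 + t ^ 2) := by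
      rw [Real.sin_two_mul, Real.sin_arctan, Real.cos_arctan]
      have hs : Real.sqrt (1 + t ^ 2) ^ 2 = 1 + t ^ 2 :=
        Real.sq_sqrt (by positivity)
      have hs0 : Real.sqrt (1 + t ^ 2) ≠ 0 := by positivity
      field_simp
      rw [hs]
    rw [hd, hsin, hg]
    have h0 : (1 + t ^ 2) ≠ 0 := (hden x).ne'
    field_simp
    ring
  -- antiderivative
  have hF : ∀ x : ℝ, HasDerivAt (fun x => -4 * k / (1 + Real.exp (k * x) ^ 2)) (g x) x := by
    intro x
    have h1 : HasDerivAt (fun x : ℝ => Real.exp (k * x)) (Real.exp (k * x) * k) x := by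
      simpa [mul_comm] using ((hasDerivAt_id x).const_mul k).exp
    have h2 : HasDerivAt (fun x : ℝ => 1 + Real.exp (k * x) ^ 2)
        (2 * Real.exp (k * x) * (Real.exp (k * x) * k)) x := by
      have := (h1.pow 2)
      simpa [pow_one, mul_comm, mul_assoc, mul_left_comm] using this.const_add 1
    have h3 := ((h2.inv (hden x).ne')).const_mul (-4 * k)
    convert h3 using 1
    · rfl
    · rfl
    · funext y; rw [div_eq_mul_inv]; rfl
    have h0 : (1 + Real.exp (k * x) ^ 2) ≠ 0 := (hden x).ne'
    rw [hg]
    field_simp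
    ring
  -- integrability of g
  have hgcont : Continuous g := by
    apply Continuous.div
    · fun_prop
    · fun_prop
    · exact fun x => by positivity
  have hgnn : ∀ x : ℝ, 0 ≤ g x := fun x => by
    have := hden x
    rw [hg]; positivity
  have hIoi : IntegrableOn g (Ioi (0:ℝ)) := by
    refine Integrable.mono' ((exp_neg_integrableOn_Ioi 0 (by positivity : (0:ℝ) < 2*k)).const_mul
      (8 * k ^ 2)) (hgcont.aestronglyMeasurable.restrict) ?_
    refine (ae_restrict_iff' measurableSet_Ioi).2 (Filter.Eventually.of_forall fun x _hx => ?_)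
    rw [Real.norm_of_nonneg (hgnn x), hg]
    have ht : (0:ℝ) < Real.exp (k * x) := Real.exp_pos _
    have hte : Real.exp (-(2*k) * x) = (Real.exp (k*x) ^ 2)⁻¹ := by
      have h2 : Real.exp (k*x) ^ 2 = Real.exp (2*k*x) := by
        rw [sq, ← Real.exp_add]; ring_nf
      rw [h2, ← Real.exp_neg]; congr 1; ring
    rw [hte, ← div_eq_mul_inv, div_le_div_iff₀ (by positivity) (by positivity)]
    nlinarith [sq_nonneg k, sq_nonneg (Real.exp (k*x))]
  have hIic : IntegrableOn g (Iic (0:ℝ)) := by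
    refine Integrable.mono' ((integrableOn_exp_mul_Iic' (by positivity : (0:ℝ) < 2*k)).const_mul
      (8 * k ^ 2)) (hgcont.aestronglyMeasurable.restrict) ?_
    refine Filter.Eventually.of_forall fun x => ?_
    rw [Real.norm_of_nonneg (hgnn x), hg]
    have ht : (0:ℝ) < Real.exp (k * x) := Real.exp_pos _
    have hte : Real.exp (2*k * x) = Real.exp (k*x) ^ 2 := by
      rw [sq, ← Real.exp_add]; ring_nf
    rw [div_le_iff₀ (by positivity), hte]
    have h1 : (1:ℝ) ≤ (1 + Real.exp (k*x) ^ 2) ^ 2 := by nlinarith [sq_nonneg (Real.exp (k*x))]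
    nlinarith [mul_le_mul_of_nonneg_left h1
      (show (0:ℝ) ≤ 8 * k ^ 2 * Real.exp (k*x) ^ 2 by positivity)]
  have hgint : Integrable g := by
    rw [← integrableOn_univ, ← Set.Iic_union_Ioi (a := (0:ℝ))]
    exact hIic.union hIoi
  -- limits of the antiderivative
  have hexp_top : Tendsto (fun x : ℝ => Real.exp (k * x) ^ 2) atTop atTop := by
    have h1 : Tendsto (fun x : ℝ => k * x) atTop atTop :=
      Tendsto.const_mul_atTop hk tendsto_id
    have h2 : Tendsto (fun x : ℝ => Real.exp (k * x)) atTop atTop :=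
      Real.tendsto_exp_atTop.comp h1
    exact (tendsto_pow_atTop (two_ne_zero)).comp h2
  have htop : Tendsto (fun x : ℝ => -4 * k / (1 + Real.exp (k * x) ^ 2)) atTop (𝓝 0) := by
    have h1 : Tendsto (fun x : ℝ => 1 + Real.exp (k * x) ^ 2) atTop atTop :=
      tendsto_atTop_add_const_left _ 1 hexp_top
    have h2 := h1.inv_tendsto_atTop
    have := h2.const_mul (-4 * k)
    simpa [div_eq_mul_inv] using this
  have hbot : Tendsto (fun x : ℝ => -4 * k / (1 + Real.exp (k * x) ^ 2)) atBot
      (𝓝 (-4 * k)) := by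
    have h1 : Tendsto (fun x : ℝ => k * x) atBot atBot :=
      Tendsto.const_mul_atBot hk tendsto_id
    have h2 : Tendsto (fun x : ℝ => Real.exp (k * x)) atBot (𝓝 0) :=
      Real.tendsto_exp_atBot.comp h1
    have h3 : Tendsto (fun x : ℝ => 1 + Real.exp (k * x) ^ 2) atBot (𝓝 1) := by
      have := (h2.pow 2).const_add 1
      simpa using this
    have h4 := Tendsto.div (tendsto_const_nhds (x := -4 * k) (f := atBot)) h3 one_ne_zero
    simpa [Pi.div_def] using h4
  have hint : ∫ x : ℝ, g x = 4 * k := by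
    have := integral_of_hasDerivAt_of_tendsto hF hgint hbot htop
    rw [this]; ring
  have heq : (∫ x : ℝ, ((deriv (fun x => 2 * Real.arctan (Real.exp (k * x))) x) ^ 2
      + k ^ 2 * (Real.sin ((fun x => 2 * Real.arctan (Real.exp (k * x))) x)) ^ 2))
      = ∫ x : ℝ, g x := by
    apply integral_congr_ae
    exact Filter.Eventually.of_forall fun x => hInt x
  rw [heq, hint]
  ring
end

section
/- For any continuously differentiable function u : ℝ → ℝ with u(-∞) = 0 and u(+∞) = π and finite potential energy, one has V(u) = (1/2)·∫_ℝ (u'(x) − k·sin(u(x)))² dx + 2k; in particular V(u) ≥ 2k (Bogomolny inequality). -/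
open Real MeasureTheory Filter

/-- Bogomolny inequality: for a C¹ map `u` of degree one (limits `0` at `−∞`
and `π` at `+∞`) with finite potential energy,
`V(u) = (1/2)∫ (u' − k·sin u)² + 2k`, hence `V(u) ≥ 2k`. -/
theorem bogomolny_inequality (k : ℝ) (hk : 0 < k) (u : ℝ → ℝ)
    (hu : ContDiff ℝ 1 u)
    (hbot : Tendsto u atBot (nhds 0))
    (htop : Tendsto u atTop (nhds Real.pi))
    (hI1 : Integrable (fun x => (deriv u x) ^ 2))
    (hI2 : Integrable (fun x => (Real.sin (u x)) ^ 2)) :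
    (1 / 2) * (∫ x : ℝ, ((deriv u x) ^ 2 + k ^ 2 * (Real.sin (u x)) ^ 2)) =
      (1 / 2) * (∫ x : ℝ, (deriv u x - k * Real.sin (u x)) ^ 2) + 2 * k ∧
    2 * k ≤ (1 / 2) * (∫ x : ℝ, ((deriv u x) ^ 2 + k ^ 2 * (Real.sin (u x)) ^ 2)) := by
  have hucont : Continuous u := hu.continuous
  have hdcont : Continuous (deriv u) := (hu.continuous_deriv le_rfl)
  have hcont : Continuous (fun x => deriv u x * Real.sin (u x)) :=
    hdcont.mul (Real.continuous_sin.comp hucont)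
  -- integrability of u' * sin(u)
  have hIprod : Integrable (fun x => deriv u x * Real.sin (u x)) := by
    refine (hI1.add hI2).mono' hcont.aestronglyMeasurable ?_
    filter_upwards with x
    have h : |deriv u x * Real.sin (u x)| ≤ (deriv u x) ^ 2 + (Real.sin (u x)) ^ 2 := by
      rw [abs_mul]
      nlinarith [sq_nonneg (|deriv u x| - |Real.sin (u x)|), sq_abs (deriv u x),
        sq_abs (Real.sin (u x)), abs_nonneg (deriv u x), abs_nonneg (Real.sin (u x))]
    simpa [Real.norm_eq_abs, abs_mul] using h
  -- FTC: ∫ u' sin u = 2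
  have hderiv : ∀ x, HasDerivAt (fun x => -Real.cos (u x)) (deriv u x * Real.sin (u x)) x := by
    intro x
    have hux : HasDerivAt u (deriv u x) x :=
      (hu.differentiable one_ne_zero x).hasDerivAt
    have := ((Real.hasDerivAt_cos (u x)).comp x hux).neg
    simpa [mul_comm, Function.comp_def, Pi.neg_def] using this
  have hbot' : Tendsto (fun x => -Real.cos (u x)) atBot (nhds (-1)) := by
    have := (Real.continuous_cos.tendsto 0).comp hbot
    simpa using this.neg
  have htop' : Tendsto (fun x => -Real.cos (u x)) atTop (nhds 1) := by
    have := (Real.continuous_cos.tendsto Real.pi).comp htop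
    simpa using this.neg
  have hkey : ∫ x : ℝ, deriv u x * Real.sin (u x) = 2 := by
    have := MeasureTheory.integral_of_hasDerivAt_of_tendsto hderiv hIprod hbot' htop'
    linarith
  -- expand the square
  have hexp : ∀ x : ℝ, (deriv u x - k * Real.sin (u x)) ^ 2 =
      (deriv u x) ^ 2 + k ^ 2 * (Real.sin (u x)) ^ 2
        - (2 * k) * (deriv u x * Real.sin (u x)) := by
    intro x; ring
  have hIsq : Integrable (fun x => k ^ 2 * (Real.sin (u x)) ^ 2) := hI2.const_mul _
  have hIsum : Integrable (fun x => (deriv u x) ^ 2 + k ^ 2 * (Real.sin (u x)) ^ 2) :=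
    hI1.add hIsq
  have hImul : Integrable (fun x => (2 * k) * (deriv u x * Real.sin (u x))) :=
    hIprod.const_mul _
  have hint : ∫ x : ℝ, (deriv u x - k * Real.sin (u x)) ^ 2 =
      (∫ x : ℝ, ((deriv u x) ^ 2 + k ^ 2 * (Real.sin (u x)) ^ 2)) - (2 * k) * 2 := by
    calc ∫ x : ℝ, (deriv u x - k * Real.sin (u x)) ^ 2
        = ∫ x : ℝ, ((deriv u x) ^ 2 + k ^ 2 * (Real.sin (u x)) ^ 2
            - (2 * k) * (deriv u x * Real.sin (u x))) := by
          simp_rw [hexp]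
      _ = (∫ x : ℝ, ((deriv u x) ^ 2 + k ^ 2 * (Real.sin (u x)) ^ 2))
            - ∫ x : ℝ, (2 * k) * (deriv u x * Real.sin (u x)) :=
          integral_sub hIsum hImul
      _ = (∫ x : ℝ, ((deriv u x) ^ 2 + k ^ 2 * (Real.sin (u x)) ^ 2)) - (2 * k) * 2 := by
          rw [integral_const_mul, hkey]
  have hnn : 0 ≤ ∫ x : ℝ, (deriv u x - k * Real.sin (u x)) ^ 2 :=
    integral_nonneg fun x => sq_nonneg _
  constructor
  · linarith
  · linarith
end

section
/- Equality V(u) = 2k in the Bogomolny inequality holds if and only if u satisfies u'(x) = k·sin(u(x)) for all x, i.e., u is a translated kink u(x) = 2·arctan(e^{k(x−c)}) for some c ∈ ℝ. -/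
open Real MeasureTheory Filter

private lemma kink_hasDerivAt' (k c : ℝ) (t : ℝ) :
    HasDerivAt (fun x => 2 * Real.arctan (Real.exp (k * (x - c))))
      (k * Real.sin (2 * Real.arctan (Real.exp (k * (t - c))))) t := by
  set s := Real.exp (k * (t - c)) with hs
  have h1 : HasDerivAt (fun x : ℝ => k * (x - c)) k t := by
    simpa using ((hasDerivAt_id t).sub_const c).const_mul k
  have h2 : HasDerivAt (fun x => Real.exp (k * (x - c))) (s * k) t := by
    exact (Real.hasDerivAt_exp (k * (t - c))).comp t h1
  have h3 := ((Real.hasDerivAt_arctan s).comp t h2).const_mul 2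
  refine h3.congr_deriv ?_
  have hpos : (0:ℝ) < 1 + s ^ 2 := by positivity
  have hsin : Real.sin (2 * Real.arctan s) = 2 * s / (1 + s ^ 2) := by
    rw [Real.sin_two_mul, Real.sin_arctan, Real.cos_arctan]
    have h := Real.sq_sqrt hpos.le
    have hne : Real.sqrt (1 + s ^ 2) ≠ 0 := by positivity
    field_simp
    rw [h]
  rw [hsin]
  field_simp

private lemma ode_unique' (k : ℝ) (hk : 0 < k) (f g : ℝ → ℝ)
    (hf : ∀ t, HasDerivAt f (k * Real.sin (f t)) t)
    (hg : ∀ t, HasDerivAt g (k * Real.sin (g t)) t)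
    (t₀ : ℝ) (heq : f t₀ = g t₀) (t : ℝ) : f t = g t := by
  have hlip : LipschitzWith k.toNNReal (fun y => k * Real.sin y) := by
    apply lipschitzWith_of_nnnorm_deriv_le (Real.differentiable_sin.const_mul k)
    intro x
    have hd : deriv (fun y => k * Real.sin y) x = k * Real.cos x := by
      simp [deriv_const_mul_field]
    rw [← NNReal.coe_le_coe, coe_nnnorm, hd, Real.coe_toNNReal _ hk.le, Real.norm_eq_abs,
      abs_mul, abs_of_pos hk]
    nlinarith [abs_cos_le_one x, abs_nonneg (Real.cos x), hk.le]
  have hL : ∀ s : ℝ, LipschitzOnWith k.toNNReal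
      ((fun _ y => k * Real.sin y) s) ((fun _ : ℝ => (Set.univ : Set ℝ)) s) :=
    fun _ => hlip.lipschitzOnWith
  have ht : t₀ ∈ Set.Ioo (min t₀ t - 1) (max t₀ t + 1) := by
    constructor <;> nlinarith [min_le_left t₀ t, le_max_left t₀ t]
  have ht' : t ∈ Set.Ioo (min t₀ t - 1) (max t₀ t + 1) := by
    constructor <;> nlinarith [min_le_right t₀ t, le_max_right t₀ t]
  exact ODE_solution_unique_of_mem_Ioo (fun s _ => hL s) ht
    (fun x _ => ⟨hf x, Set.mem_univ _⟩) (fun x _ => ⟨hg x, Set.mem_univ _⟩) heq ht'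

private lemma ode_to_kink' (k : ℝ) (hk : 0 < k) (u : ℝ → ℝ) (hcont : Continuous u)
    (hode : ∀ x, HasDerivAt u (k * Real.sin (u x)) x)
    (hbot : Tendsto u atBot (nhds 0))
    (htop : Tendsto u atTop (nhds Real.pi)) :
    ∃ c : ℝ, ∀ x, u x = 2 * Real.arctan (Real.exp (k * (x - c))) := by
  have hzero : ∀ x₀, u x₀ ≠ 0 := by
    intro x₀ h0
    have hall : ∀ t, u t = 0 := fun t =>
      ode_unique' k hk u (fun _ => 0) hode
        (fun t => by simpa using hasDerivAt_const t (0:ℝ)) x₀ (by simp [h0]) t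
    have h2 : Tendsto u atTop (nhds 0) := by
      have : u = fun _ => (0:ℝ) := funext hall
      rw [this]; exact tendsto_const_nhds
    exact Real.pi_ne_zero (tendsto_nhds_unique htop h2)
  have hpi : ∀ x₀, u x₀ ≠ π := by
    intro x₀ h0
    have hall : ∀ t, u t = π := fun t =>
      ode_unique' k hk u (fun _ => π) hode
        (fun t => by simpa using hasDerivAt_const t (π:ℝ)) x₀ (by simp [h0]) t
    have h2 : Tendsto u atBot (nhds π) := by
      have : u = fun _ => (π:ℝ) := funext hall
      rw [this]; exact tendsto_const_nhds
    exact Real.pi_ne_zero (tendsto_nhds_unique h2 hbot)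
  have h0lt : 0 < u 0 := by
    by_contra h; push_neg at h
    have hev : ∀ᶠ x in atTop, π/2 < u x :=
      htop.eventually (eventually_gt_nhds (by linarith [Real.pi_pos]))
    obtain ⟨x₁, hx₁, hx₁'⟩ := (hev.and (eventually_ge_atTop (0:ℝ))).exists
    obtain ⟨x₀, _, hx₀⟩ := intermediate_value_Icc hx₁' hcont.continuousOn
      (show (0:ℝ) ∈ Set.Icc (u 0) (u x₁) from ⟨h, by linarith [Real.pi_pos]⟩)
    exact hzero x₀ hx₀
  have hltpi : u 0 < π := by
    by_contra h; push_neg at h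
    have hev : ∀ᶠ x in atBot, u x < π/2 :=
      hbot.eventually (eventually_lt_nhds (by linarith [Real.pi_pos]))
    obtain ⟨x₁, hx₁, hx₁'⟩ := (hev.and (eventually_le_atBot (0:ℝ))).exists
    obtain ⟨x₀, _, hx₀⟩ := intermediate_value_Icc hx₁' hcont.continuousOn
      (show π ∈ Set.Icc (u x₁) (u 0) from ⟨by linarith [Real.pi_pos], h⟩)
    exact hpi x₀ hx₀
  have hθ1 : 0 < u 0 / 2 := by linarith
  have hθ2 : u 0 / 2 < π/2 := by linarith
  have htanpos : 0 < Real.tan (u 0 / 2) :=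
    Real.tan_pos_of_pos_of_lt_pi_div_two hθ1 hθ2
  refine ⟨-(Real.log (Real.tan (u 0 / 2)))/k, fun x => ?_⟩
  set c := -(Real.log (Real.tan (u 0 / 2)))/k with hc
  have hinit : u 0 = 2 * Real.arctan (Real.exp (k * (0 - c))) := by
    have h1 : k * (0 - c) = Real.log (Real.tan (u 0 / 2)) := by
      rw [hc]; field_simp; ring
    rw [h1, Real.exp_log htanpos, Real.arctan_tan (by linarith) hθ2]
    ring
  exact ode_unique' k hk u (fun x => 2 * Real.arctan (Real.exp (k * (x - c)))) hode
    (kink_hasDerivAt' k c) 0 hinit x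

/-- Equality `V(u) = 2k` in the Bogomolny inequality holds iff
`u' = k·sin(u)` everywhere, i.e. iff `u` is a translated kink
`u(x) = 2·arctan(e^{k(x−c)})` for some `c`. -/
theorem bogomolny_equality_iff_kink (k : ℝ) (hk : 0 < k) (u : ℝ → ℝ)
    (hu : ContDiff ℝ 1 u)
    (hbot : Tendsto u atBot (nhds 0))
    (htop : Tendsto u atTop (nhds Real.pi))
    (hI1 : Integrable (fun x => (deriv u x) ^ 2))
    (hI2 : Integrable (fun x => (Real.sin (u x)) ^ 2)) :
    ((1 / 2) * (∫ x : ℝ, ((deriv u x) ^ 2 + k ^ 2 * (Real.sin (u x)) ^ 2)) = 2 * k ↔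
      ∀ x, deriv u x = k * Real.sin (u x)) ∧
    ((1 / 2) * (∫ x : ℝ, ((deriv u x) ^ 2 + k ^ 2 * (Real.sin (u x)) ^ 2)) = 2 * k ↔
      ∃ c : ℝ, ∀ x, u x = 2 * Real.arctan (Real.exp (k * (x - c)))) := by
  have hcu : Continuous u := hu.continuous
  have hd : Continuous (deriv u) := hu.continuous_deriv le_rfl
  have hprod_cont : Continuous (fun x => Real.sin (u x) * deriv u x) :=
    (Real.continuous_sin.comp hcu).mul hd
  have hI3 : Integrable (fun x => Real.sin (u x) * deriv u x) := by
    refine ((hI2.add hI1).const_mul (1/2)).mono' hprod_cont.aestronglyMeasurable ?_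
    filter_upwards with x
    rw [Real.norm_eq_abs, abs_mul]
    simp only [Pi.add_apply]
    nlinarith [sq_nonneg (|Real.sin (u x)| - |deriv u x|), abs_nonneg (Real.sin (u x)),
      abs_nonneg (deriv u x), sq_abs (Real.sin (u x)), sq_abs (deriv u x)]
  have hft : ∫ x, Real.sin (u x) * deriv u x = 2 := by
    have hder : ∀ x, HasDerivAt (fun y => -Real.cos (u y)) (Real.sin (u x) * deriv u x) x := by
      intro x
      have h1 : HasDerivAt u (deriv u x) x := (hu.differentiable one_ne_zero x).hasDerivAt
      have h2 := ((Real.hasDerivAt_cos (u x)).comp x h1).neg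
      exact h2.congr_deriv (by ring)
    have hlim1 : Tendsto (fun y => -Real.cos (u y)) atBot (nhds (-1)) := by
      have := ((Real.continuous_cos.tendsto 0).comp hbot).neg
      simpa using this
    have hlim2 : Tendsto (fun y => -Real.cos (u y)) atTop (nhds 1) := by
      have := ((Real.continuous_cos.tendsto π).comp htop).neg
      simpa using this
    have := integral_of_hasDerivAt_of_tendsto hder hI3 hlim1 hlim2
    rw [this]; norm_num
  have hIA : Integrable (fun x => (deriv u x) ^ 2 + k ^ 2 * (Real.sin (u x)) ^ 2) :=
    hI1.add (hI2.const_mul _)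
  have expand : (fun x => (deriv u x - k * Real.sin (u x)) ^ 2)
      = fun x => ((deriv u x) ^ 2 + k ^ 2 * (Real.sin (u x)) ^ 2)
          - (2*k) * (Real.sin (u x) * deriv u x) := by
    funext x; ring
  have hIq : Integrable (fun x => (deriv u x - k * Real.sin (u x)) ^ 2) := by
    rw [expand]; exact hIA.sub (hI3.const_mul _)
  have h4 : ∫ x, (deriv u x - k * Real.sin (u x)) ^ 2
      = (∫ x, ((deriv u x) ^ 2 + k ^ 2 * (Real.sin (u x)) ^ 2)) - 4 * k := by
    rw [expand, integral_sub hIA (hI3.const_mul _), integral_const_mul, hft]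
    ring
  have hiff1 : (1 / 2) * (∫ x : ℝ, ((deriv u x) ^ 2 + k ^ 2 * (Real.sin (u x)) ^ 2)) = 2 * k ↔
      ∀ x, deriv u x = k * Real.sin (u x) := by
    constructor
    · intro hV
      have hzero : ∫ x, (deriv u x - k * Real.sin (u x)) ^ 2 = 0 := by
        rw [h4]; linarith
      have hae := (integral_eq_zero_iff_of_nonneg (fun x => sq_nonneg _) hIq).1 hzero
      have hcont2 : Continuous (fun x => (deriv u x - k * Real.sin (u x)) ^ 2) :=
        ((hd.sub (continuous_const.mul (Real.continuous_sin.comp hcu))).pow 2)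
      have heq : (fun x => (deriv u x - k * Real.sin (u x)) ^ 2) = (fun _ => (0:ℝ)) :=
        (hcont2.ae_eq_iff_eq (μ := volume) continuous_const).1 hae
      intro x
      have h6 := congrFun heq x
      have h5 : deriv u x - k * Real.sin (u x) = 0 := sq_eq_zero_iff.1 h6
      linarith
    · intro h
      have hz : (fun x => (deriv u x - k * Real.sin (u x)) ^ 2) = fun _ => (0:ℝ) := by
        funext x; rw [h x]; ring
      rw [hz] at h4
      simp at h4
      linarith
  refine ⟨hiff1, hiff1.trans ⟨fun h => ?_, fun h => ?_⟩⟩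
  · exact ode_to_kink' k hk u hcu
      (fun x => by
        have h1 : HasDerivAt u (deriv u x) x := (hu.differentiable one_ne_zero x).hasDerivAt
        rwa [h x] at h1) hbot htop
  · obtain ⟨c, hc⟩ := h
    intro x
    have hueq : u = fun x => 2 * Real.arctan (Real.exp (k * (x - c))) := funext hc
    rw [hueq]
    rw [(kink_hasDerivAt' k c x).deriv]
end
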